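/- Let c > 0 and n ≥ 1 a natural number, and define f : (−π/2, π/2) → ℝ by f(x) = exp(−(nπ/c)·artanh(sin x)). Then f is twice differentiable on (−π/2, π/2) and satisfies, for every x ∈ (−π/2, π/2): −f''(x) + tan(x)·f'(x) + ((nπ/c)²/cos²x)·f(x) = 0. -/

import Mathlib

open Real

/-- The real inverse hyperbolic tangent, artanh(y) = ½·log((1+y)/(1−y)). -/
noncomputable def artanh (y : ℝ) : ℝ := (1 / 2) * Real.log ((1 + y) / (1 - y))

lemma artanh_sin_hasDerivAt {x : ℝ} (hc : 0 < Real.cos x) :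
    HasDerivAt (fun t => _root_.artanh (Real.sin t)) (1 / Real.cos x) x := by
  have hpyth := Real.sin_sq_add_cos_sq x
  have h1 : -1 < Real.sin x := by nlinarith
  have h2 : Real.sin x < 1 := by nlinarith
  have hd : (1 : ℝ) - Real.sin x ≠ 0 := by linarith
  have hnum : (0:ℝ) < 1 + Real.sin x := by linarith
  have hden : (0:ℝ) < 1 - Real.sin x := by linarith
  have hq : HasDerivAt (fun t => (1 + Real.sin t) / (1 - Real.sin t))
      ((Real.cos x * (1 - Real.sin x) - (1 + Real.sin x) * (-Real.cos x)) /
        (1 - Real.sin x) ^ 2) x :=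
    HasDerivAt.div ((Real.hasDerivAt_sin x).const_add 1)
      ((Real.hasDerivAt_sin x).const_sub 1) hd
  have hu : (1 + Real.sin x) / (1 - Real.sin x) ≠ 0 := by positivity
  have hlog := (hq.log hu).const_mul (1/2 : ℝ)
  have hmain : HasDerivAt (fun t => _root_.artanh (Real.sin t))
      (1/2 * ((Real.cos x * (1 - Real.sin x) - (1 + Real.sin x) * (-Real.cos x)) /
        (1 - Real.sin x) ^ 2 / ((1 + Real.sin x) / (1 - Real.sin x)))) x := by
    simpa [_root_.artanh] using hlog
  convert hmain using 1
  have hcne : Real.cos x ≠ 0 := ne_of_gt hc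
  field_simp
  nlinarith [hpyth]

theorem stmt_13 (c : ℝ) (hc : 0 < c) (n : ℕ) (hn : 1 ≤ n)
    (f : ℝ → ℝ)
    (hf : f = fun x : ℝ => Real.exp (-((n : ℝ) * π / c) * _root_.artanh (Real.sin x))) :
    (∀ x ∈ Set.Ioo (-(π / 2)) (π / 2), DifferentiableAt ℝ f x) ∧
    (∀ x ∈ Set.Ioo (-(π / 2)) (π / 2), DifferentiableAt ℝ (deriv f) x) ∧
    (∀ x ∈ Set.Ioo (-(π / 2)) (π / 2),
      -(deriv (deriv f) x) + Real.tan x * deriv f x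
          + (((n : ℝ) * π / c) ^ 2 / (Real.cos x) ^ 2) * f x = 0) := by
  set a : ℝ := (n : ℝ) * π / c with ha
  have hf' : ∀ x ∈ Set.Ioo (-(π / 2)) (π / 2),
      HasDerivAt f (-(a / Real.cos x) * f x) x := by
    intro x hx
    have hcos : 0 < Real.cos x := Real.cos_pos_of_mem_Ioo hx
    have hinner : HasDerivAt (fun t => -a * _root_.artanh (Real.sin t))
        (-a * (1 / Real.cos x)) x := (artanh_sin_hasDerivAt hcos).const_mul (-a)
    have hE := hinner.exp
    rw [hf]
    convert hE using 1
    simp only [hf]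
    ring
  set F : ℝ → ℝ := fun x => -(a / Real.cos x) * f x with hF
  have hderiv_eq : ∀ x ∈ Set.Ioo (-(π / 2)) (π / 2), deriv f x = F x :=
    fun x hx => (hf' x hx).deriv
  have hF' : ∀ x ∈ Set.Ioo (-(π / 2)) (π / 2),
      HasDerivAt F (-(a * Real.sin x / Real.cos x ^ 2) * f x
        + -(a / Real.cos x) * (-(a / Real.cos x) * f x)) x := by
    intro x hx
    have hcos : 0 < Real.cos x := Real.cos_pos_of_mem_Ioo hx
    have hcne : Real.cos x ≠ 0 := ne_of_gt hcos
    have h1 : HasDerivAt (fun t => -(a / Real.cos t))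
        (-(a * Real.sin x / Real.cos x ^ 2)) x := by
      have hinv : HasDerivAt (fun t => (Real.cos t)⁻¹)
          (-(-Real.sin x) / Real.cos x ^ 2) x := (Real.hasDerivAt_cos x).inv hcne
      have h2 := (hinv.const_mul a).neg
      have h3 : (fun t => -(a / Real.cos t)) = fun t => -(a * (Real.cos t)⁻¹) := by
        funext t; rw [div_eq_mul_inv]
      have h4 : -(a * Real.sin x / Real.cos x ^ 2)
          = -(a * (- -Real.sin x / Real.cos x ^ 2)) := by ring
      rw [h3, h4]
      exact h2
    exact h1.mul (hf' x hx)
  have hmem : ∀ x ∈ Set.Ioo (-(π / 2)) (π / 2),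
      deriv f =ᶠ[nhds x] F := by
    intro x hx
    exact Filter.eventuallyEq_of_mem (isOpen_Ioo.mem_nhds hx)
      (fun y hy => hderiv_eq y hy)
  refine ⟨fun x hx => (hf' x hx).differentiableAt, ?_, ?_⟩
  · intro x hx
    exact ((hF' x hx).congr_of_eventuallyEq (hmem x hx)).differentiableAt
  · intro x hx
    have hcos : 0 < Real.cos x := Real.cos_pos_of_mem_Ioo hx
    have hcne : Real.cos x ≠ 0 := ne_of_gt hcos
    have h2 : deriv (deriv f) x = -(a * Real.sin x / Real.cos x ^ 2) * f x
        + -(a / Real.cos x) * (-(a / Real.cos x) * f x) :=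
      ((hF' x hx).congr_of_eventuallyEq (hmem x hx)).deriv
    rw [h2, hderiv_eq x hx, hF, Real.tan_eq_sin_div_cos]
    simp only []
    field_simp
    ring
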